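/- Let X be a real random variable and C > 0 with |E[X]| ≤ C/2. Define the clipped variable X̃ = sign(X)·min(C, |X|). Then |E[X̃] - E[X]| ≤ (2/C)·Var[X]. -/

import Mathlib

open MeasureTheory ProbabilityTheory

theorem clipping_bias_bound
    {Ω : Type*} [MeasureSpace Ω] [IsProbabilityMeasure (ℙ : Measure Ω)]
    (X : Ω → ℝ) (C : ℝ) (hC : 0 < C)
    (hint : Integrable X) (hL2 : MemLp X 2 ℙ)
    (hmean : |∫ ω, X ω| ≤ C / 2) :
    |(∫ ω, Real.sign (X ω) * min C |X ω|) - ∫ ω, X ω| ≤ (2 / C) * Var[X] := by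
  set μ := ∫ ω, X ω with hμ
  -- clipping as max/min
  have hclip : ∀ x : ℝ, Real.sign x * min C |x| = max (-C) (min C x) := by
    intro x
    rcases lt_trichotomy x 0 with h | h | h
    · rw [Real.sign_of_neg h, abs_of_neg h, min_eq_right (le_of_lt (h.trans hC))]
      rcases le_total C (-x) with h2 | h2
      · rw [min_eq_left h2, max_eq_left (by linarith)]; ring
      · rw [min_eq_right h2, max_eq_right (by linarith)]; ring
    · rw [h, Real.sign_zero, zero_mul, min_eq_right hC.le,
        max_eq_right (neg_nonpos.mpr hC.le)]
    · rw [Real.sign_of_pos h, abs_of_pos h, one_mul,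
        max_eq_right (le_min (by linarith) (by linarith))]
  set g : Ω → ℝ := fun ω => Real.sign (X ω) * min C |X ω| with hg
  have hgm : AEStronglyMeasurable g ℙ := by
    have : g = fun ω => max (-C) (min C (X ω)) := funext fun ω => hclip (X ω)
    rw [this]
    exact (continuous_const.max (continuous_const.min continuous_id)).comp_aestronglyMeasurable
      hint.aestronglyMeasurable
  have hgi : Integrable g := by
    refine Integrable.mono' (integrable_const C) hgm ?_
    filter_upwards with ω
    rw [Real.norm_eq_abs, show g ω = max (-C) (min C (X ω)) from hclip (X ω), abs_le]
    constructor
    · exact le_max_left _ _ |>.trans' (by linarith)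
    · exact max_le (by linarith) (min_le_left _ _)
  have hXm : Integrable (fun ω => (X ω - μ) ^ 2) := by
    have := (hL2.sub (memLp_const μ)).integrable_sq
    simpa using this
  have key : ∀ ω, |g ω - X ω| ≤ (2 / C) * (X ω - μ) ^ 2 := by
    intro ω
    set x := X ω with hx
    rcases le_or_gt |x| C with h | h
    · have : g ω = x := by
        simp only [hg, ← hx, min_eq_right h]
        rcases lt_trichotomy x 0 with h0 | h0 | h0
        · rw [Real.sign_of_neg h0, abs_of_neg h0]; ring
        · rw [h0, Real.sign_zero, abs_zero, mul_zero]
        · rw [Real.sign_of_pos h0, abs_of_pos h0, one_mul]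
      rw [this, sub_self, abs_zero]
      positivity
    · have hgx : g ω = Real.sign x * C := by simp [hg, ← hx, min_eq_left h.le]
      have habs : |x| - |μ| ≤ |x - μ| := abs_sub_abs_le_abs_sub x μ
      have hsq : |x - μ| ^ 2 = (x - μ) ^ 2 := sq_abs _
      have h2 : |x - μ| ≥ |x| - C / 2 := by linarith
      have h3 : (0:ℝ) ≤ |x - μ| := abs_nonneg _
      have hgoal : |x| - C ≤ (2 / C) * (x - μ) ^ 2 := by
        rw [div_mul_eq_mul_div, le_div_iff₀ hC]
        nlinarith [sq_nonneg (|x| - C), sq_nonneg (|x - μ| - (|x| - C/2))]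
      rcases lt_trichotomy x 0 with hx0 | hx0 | hx0
      · rw [hgx, Real.sign_of_neg hx0]
        rw [abs_of_neg hx0] at hgoal h
        rw [abs_of_nonneg (by linarith)]
        linarith
      · exfalso; rw [hx0, abs_zero] at h; linarith
      · rw [hgx, Real.sign_of_pos hx0]
        rw [abs_of_pos hx0] at hgoal h
        rw [abs_of_nonpos (by linarith)]
        linarith
  have hvar : Var[X] = ∫ ω, (X ω - μ) ^ 2 := by
    rw [variance_eq_integral hL2.aestronglyMeasurable.aemeasurable]
  calc |(∫ ω, g ω) - ∫ ω, X ω| = |∫ ω, (g ω - X ω)| := by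
        rw [integral_sub hgi hint]
    _ ≤ ∫ ω, |g ω - X ω| := by
        simpa [Real.norm_eq_abs] using
          norm_integral_le_integral_norm (fun ω => g ω - X ω)
    _ ≤ ∫ ω, (2 / C) * (X ω - μ) ^ 2 :=
        integral_mono (hgi.sub hint).abs (hXm.const_mul _) key
    _ = (2 / C) * Var[X] := by rw [integral_const_mul, hvar]
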